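/- Let A be a commutative complex Banach algebra with identity 1 and let a ∈ A. The following are equivalent: (1) M_a is recurrent on A; (2) M_a is rigid on A, i.e. there exists a strictly increasing sequence (n_k) of positive integers such that a^{n_k} x → x for every x ∈ A; (3) M_a is uniformly rigid on A, i.e. there exists a strictly increasing sequence (n_k) of positive integers such that ‖a^{n_k} − 1‖ → 0 in A. -/
import Mathlib


open Filter Topology

lemma rigid_of_unif {A : Type*} [NormedCommRing A] [NormedAlgebra ℂ A] [CompleteSpace A]
    {a : A} {n : ℕ → ℕ} (h : Tendsto (fun k => ‖a ^ n k - 1‖) atTop (𝓝 0)) (x : A) :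
    Tendsto (fun k => a ^ n k * x) atTop (𝓝 x) := by
  have h1 : Tendsto (fun k => a ^ n k) atTop (𝓝 1) := by
    rw [tendsto_iff_norm_sub_tendsto_zero]; exact h
  simpa using h1.mul_const x

lemma unif_of_dense {A : Type*} [NormedCommRing A] [NormedAlgebra ℂ A] [CompleteSpace A]
    {a : A}
    (hd : Dense {x : A | ∃ n : ℕ → ℕ, StrictMono n ∧ (∀ k, 0 < n k) ∧
        Tendsto (fun k => a ^ n k * x) atTop (𝓝 x)}) :
    ∃ n : ℕ → ℕ, StrictMono n ∧ (∀ k, 0 < n k) ∧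
        Tendsto (fun k => ‖a ^ n k - 1‖) atTop (𝓝 0) := by
  obtain ⟨x, hball, n, hmono, hpos, hlim⟩ := (Metric.dense_iff.mp hd 1 1 one_pos)
  refine ⟨n, hmono, hpos, ?_⟩
  have hx1 : ‖1 - x‖ < 1 := by
    have := Metric.mem_ball.mp hball
    rwa [dist_eq_norm, norm_sub_rev] at this
  set u : Aˣ := Units.oneSub (1 - x) hx1 with hu
  have huv : (u : A) = x := by simp [hu, Units.oneSub]
  have h2 : Tendsto (fun k => a ^ n k * x * ↑u⁻¹) atTop (𝓝 (x * ↑u⁻¹)) :=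
    hlim.mul_const _
  have hxu : x * (↑u⁻¹ : A) = 1 := by rw [← huv]; exact u.mul_inv
  have h3 : Tendsto (fun k => a ^ n k) atTop (𝓝 1) := by
    rw [← hxu]
    convert h2 using 2 with k
    rw [mul_assoc, hxu, mul_one]
  rw [tendsto_iff_norm_sub_tendsto_zero] at h3
  exact h3

/-- For a multiplication operator `M_a` on a commutative complex Banach
algebra with identity, recurrence, rigidity and uniform rigidity are all equivalent. -/
theorem recurrent_iff_rigid_iff_uniformly_rigid
    (A : Type*) [NormedCommRing A] [NormedAlgebra ℂ A] [CompleteSpace A]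
    (a : A) :
    (Dense {x : A | ∃ n : ℕ → ℕ, StrictMono n ∧ (∀ k, 0 < n k) ∧
        Tendsto (fun k => a ^ n k * x) atTop (𝓝 x)} ↔
      ∃ n : ℕ → ℕ, StrictMono n ∧ (∀ k, 0 < n k) ∧
        ∀ x : A, Tendsto (fun k => a ^ n k * x) atTop (𝓝 x)) ∧
    ((∃ n : ℕ → ℕ, StrictMono n ∧ (∀ k, 0 < n k) ∧
        ∀ x : A, Tendsto (fun k => a ^ n k * x) atTop (𝓝 x)) ↔
      ∃ n : ℕ → ℕ, StrictMono n ∧ (∀ k, 0 < n k) ∧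
        Tendsto (fun k => ‖a ^ n k - 1‖) atTop (𝓝 0)) := by
  constructor
  · constructor
    · intro hd
      obtain ⟨n, h1, h2, h3⟩ := unif_of_dense hd
      exact ⟨n, h1, h2, fun x => rigid_of_unif h3 x⟩
    · rintro ⟨n, h1, h2, h3⟩ x
      exact subset_closure ⟨n, h1, h2, h3 x⟩
  · constructor
    · rintro ⟨n, h1, h2, h3⟩
      refine ⟨n, h1, h2, ?_⟩
      have := h3 1
      rw [tendsto_iff_norm_sub_tendsto_zero] at this
      simpa using this
    · rintro ⟨n, h1, h2, h3⟩
      exact ⟨n, h1, h2, fun x => rigid_of_unif h3 x⟩
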